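/- Let G be the free group of rank 2 and let A = {a_0, a_1} be a set of free generators of G. Then for all integers r ≥ 2 and ℓ ≥ 1, the set A is not an asymptotic (r,ℓ)-approximate group; that is, for every integer h_0 there exists an integer h ≥ h_0 such that no subset X_h of G with |X_h| ≤ ℓ satisfies A^{hr} ⊆ X_h A^h. -/

import Mathlib

open Pointwise

namespace FGaux

abbrev G := FreeGroup (Fin 2)

lemma reduce_pos (l : List (Fin 2)) :
    FreeGroup.reduce (l.map (fun a => (a, true))) = l.map (fun a => (a, true)) := by
  induction l with
  | nil => rfl
  | cons a l ih =>
      rw [List.map_cons, FreeGroup.reduce.cons, ih]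
      cases l with
      | nil => rfl
      | cons b l => simp

lemma fword_eq (l : List (Fin 2)) :
    (l.map FreeGroup.of).prod = FreeGroup.mk (l.map (fun a => (a, true))) := by
  induction l with
  | nil => simp [FreeGroup.one_eq_mk]
  | cons a l ih =>
      simp only [List.map_cons, List.prod_cons, ih, FreeGroup.of, FreeGroup.mul_mk]
      rfl

lemma fword_injective : Function.Injective (fun l : List (Fin 2) => (l.map FreeGroup.of).prod) := by
  intro l₁ l₂ h
  simp only [fword_eq] at h
  have := congrArg FreeGroup.toWord h
  rw [FreeGroup.toWord_mk, FreeGroup.toWord_mk, reduce_pos, reduce_pos] at this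
  exact List.map_injective_iff.2 (fun a b hab => by simpa using hab) this

lemma fword_mem_pow (l : List (Fin 2)) :
    (l.map FreeGroup.of).prod ∈ ({FreeGroup.of 0, FreeGroup.of 1} : Finset G) ^ l.length := by
  induction l with
  | nil => simp
  | cons a l ih =>
      rw [List.map_cons, List.prod_cons, List.length_cons, pow_succ']
      refine Finset.mul_mem_mul ?_ ih
      fin_cases a <;> simp

end FGaux

theorem free_generators_not_asymptotic_approximate_group
    (A : Set (FreeGroup (Fin 2))) (hA : A = {FreeGroup.of 0, FreeGroup.of 1})
    (r ℓ : ℕ) (hr : 2 ≤ r) (hℓ : 1 ≤ ℓ) (h₀ : ℕ) :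
    ∃ h : ℕ, h₀ ≤ h ∧
      ∀ X : Finset (FreeGroup (Fin 2)), X.card ≤ ℓ → ¬(A ^ (h * r) ⊆ ↑X * A ^ h) := by
  set B : Finset (FreeGroup (Fin 2)) := {FreeGroup.of 0, FreeGroup.of 1} with hB
  have hAB : A = (↑B : Set (FreeGroup (Fin 2))) := by simp [hA, hB]
  refine ⟨max h₀ ℓ + 1, by omega, ?_⟩
  set h := max h₀ ℓ + 1 with hh
  have hℓh : ℓ < 2 ^ h := lt_of_lt_of_le (Nat.lt_two_pow_self (n := ℓ))
    (Nat.pow_le_pow_right (by norm_num) (by omega))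
  have hhr : h + h ≤ h * r := by
    have := Nat.mul_le_mul_left h hr; omega
  clear_value h
  intro X hX hsub
  rw [hAB, ← Finset.coe_pow, ← Finset.coe_pow, ← Finset.coe_mul, Finset.coe_subset] at hsub
  -- lower bound on (B ^ (h*r)).card
  set F : (Fin (h * r) → Fin 2) → FreeGroup (Fin 2) :=
    fun w => ((List.ofFn w).map FreeGroup.of).prod with hF
  have hFinj : Function.Injective F :=
    FGaux.fword_injective.comp List.ofFn_injective
  have hTsub : (Finset.univ.image F) ⊆ B ^ (h * r) := by
    intro x hx
    obtain ⟨w, -, rfl⟩ := Finset.mem_image.1 hx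
    have := FGaux.fword_mem_pow (List.ofFn w)
    simpa [hF, hB] using this
  have hcardT : (Finset.univ.image F).card = 2 ^ (h * r) := by
    rw [Finset.card_image_of_injective _ hFinj]
    simp
  have hlow : 2 ^ (h * r) ≤ (B ^ (h * r)).card := by
    rw [← hcardT]; exact Finset.card_le_card hTsub
  have hup : (X * B ^ h).card ≤ ℓ * 2 ^ h := by
    calc (X * B ^ h).card ≤ X.card * (B ^ h).card := Finset.card_mul_le
      _ ≤ ℓ * 2 ^ h := by
          refine Nat.mul_le_mul hX ?_
          calc (B ^ h).card ≤ B.card ^ h := Finset.card_pow_le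
            _ ≤ 2 ^ h := Nat.pow_le_pow_left (by
                simp only [hB]
                exact (Finset.card_insert_le _ _).trans (by simp)) h
  have hle : 2 ^ (h * r) ≤ ℓ * 2 ^ h :=
    hlow.trans ((Finset.card_le_card hsub).trans hup)
  have hbig : ℓ * 2 ^ h < 2 ^ (h * r) := by
    calc ℓ * 2 ^ h < 2 ^ h * 2 ^ h :=
          mul_lt_mul_of_pos_right hℓh (pow_pos (by norm_num) h)
      _ = 2 ^ (h + h) := (pow_add 2 h h).symm
      _ ≤ 2 ^ (h * r) := Nat.pow_le_pow_right (by norm_num) hhr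
  omega
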